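/- arXiv:2511.07452 — 2 statements merged into one kernel-verified Lean document; each statement's English description precedes it below -/
import Mathlib

section
/- Let v_1,…,v_n be distinct unit vectors in ℂ^d spanning distinct lines, such that the values |⟨v_j,v_k⟩|² for j ≠ k lie in a set A ⊆ [0,1) of size s. Then n ≤ C(s+d−1, d−1) · C(s−ε+d−1, d−1), where ε = 1 if 0 ∈ A and ε = 0 otherwise. -/
open Finset

namespace SAngularAux

variable {n d : ℕ} (x : Fin n → Fin d → ℂ)

/-- Monomial function on the index set: `k ↦ ∏ x_k^α * ∏ (conj x_k)^β`. -/
noncomputable def mono (α β : Fin d → ℕ) : Fin n → ℂ :=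
  fun k => (∏ i, (x k i) ^ α i) * ∏ i, (starRingEnd ℂ) (x k i) ^ β i

/-- The finset of monomial functions of bidegree `(a, b)`. -/
noncomputable def T (a b : ℕ) : Finset (Fin n → ℂ) :=
  (Finset.Nat.antidiagonalTuple d a ×ˢ Finset.Nat.antidiagonalTuple d b).image
    fun p => mono x p.1 p.2

/-- Span of bihomogeneous monomial functions of bidegree `(a, b)`. -/
noncomputable def Spn (a b : ℕ) : Submodule ℂ (Fin n → ℂ) :=
  Submodule.span ℂ (T x a b : Set (Fin n → ℂ))

lemma mono_mem {α β : Fin d → ℕ} {a b : ℕ} (hα : ∑ i, α i = a) (hβ : ∑ i, β i = b) :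
    mono x α β ∈ Spn x a b := by
  apply Submodule.subset_span
  rw [Finset.mem_coe]
  refine Finset.mem_image.2 ⟨(α, β), ?_, rfl⟩
  simp [Finset.mem_product, Finset.Nat.mem_antidiagonalTuple, hα, hβ]

lemma prod_pow_add_single (y : Fin d → ℂ) (α : Fin d → ℕ) (i : Fin d) :
    ∏ i', y i' ^ ((α + (Pi.single i 1 : Fin d → ℕ)) i') = y i * ∏ i', y i' ^ α i' := by
  have h : ∏ i', y i' ^ (Pi.single i 1 : Fin d → ℕ) i' = y i := by
    rw [Finset.prod_eq_single i (fun b _ hb => by simp [Pi.single_eq_of_ne hb]) (by simp)]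
    simp
  simp only [Pi.add_apply, pow_add, Finset.prod_mul_distrib, h]
  ring

/-- Multiplication by a fixed function, as a linear map. -/
def mulL (c : Fin n → ℂ) : (Fin n → ℂ) →ₗ[ℂ] (Fin n → ℂ) where
  toFun f := fun k => c k * f k
  map_add' f g := by funext k; simp [mul_add]
  map_smul' r f := by funext k; simp [smul_eq_mul]; ring

lemma mul_mem_of_forall_mono {c : Fin n → ℂ} {a b a' b' : ℕ}
    (hc : ∀ α β : Fin d → ℕ, ∑ i, α i = a → ∑ i, β i = b →
      (fun k => c k * mono x α β k) ∈ Spn x a' b')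
    {f : Fin n → ℂ} (hf : f ∈ Spn x a b) :
    (fun k => c k * f k) ∈ Spn x a' b' := by
  have h2 : Spn x a b ≤ Submodule.comap (mulL c) (Spn x a' b') := by
    rw [Spn, Submodule.span_le]
    intro g hg
    rw [Finset.mem_coe] at hg
    simp only [T, Finset.mem_image, Finset.mem_product] at hg
    obtain ⟨⟨α, β⟩, ⟨hα, hβ⟩, rfl⟩ := hg
    exact hc α β (Finset.Nat.mem_antidiagonalTuple.1 hα) (Finset.Nat.mem_antidiagonalTuple.1 hβ)
  exact h2 hf

lemma mulz (i : Fin d) {a b : ℕ} {f : Fin n → ℂ} (hf : f ∈ Spn x a b) :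
    (fun k => x k i * f k) ∈ Spn x (a + 1) b := by
  refine mul_mem_of_forall_mono x (fun α β hα hβ => ?_) hf
  have key : (fun k => x k i * mono x α β k) = mono x (α + (Pi.single i 1 : Fin d → ℕ)) β := by
    funext k
    simp only [mono]
    rw [prod_pow_add_single]
    ring
  rw [key]
  refine mono_mem x ?_ hβ
  simp [Finset.sum_add_distrib, hα]

lemma mulw (i : Fin d) {a b : ℕ} {f : Fin n → ℂ} (hf : f ∈ Spn x a b) :
    (fun k => (starRingEnd ℂ) (x k i) * f k) ∈ Spn x a (b + 1) := by
  refine mul_mem_of_forall_mono x (fun α β hα hβ => ?_) hf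
  have key : (fun k => (starRingEnd ℂ) (x k i) * mono x α β k)
      = mono x α (β + (Pi.single i 1 : Fin d → ℕ)) := by
    funext k
    simp only [mono]
    rw [prod_pow_add_single (fun i' => (starRingEnd ℂ) (x k i'))]
    ring
  rw [key]
  refine mono_mem x hα ?_
  simp [Finset.sum_add_distrib, hβ]

lemma mulp (u : Fin d → ℂ) {a b : ℕ} {f : Fin n → ℂ} (hf : f ∈ Spn x a b) :
    (fun k => (∑ i, u i * x k i) * f k) ∈ Spn x (a + 1) b := by
  have key : (fun k => (∑ i, u i * x k i) * f k)
      = ∑ i : Fin d, u i • fun k => x k i * f k := by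
    funext k
    simp [Finset.sum_apply, Finset.sum_mul, smul_eq_mul, mul_assoc]
  rw [key]
  exact Submodule.sum_mem _ fun i _ => Submodule.smul_mem _ _ (mulz x i hf)

lemma mulq (u : Fin d → ℂ) {a b : ℕ} {f : Fin n → ℂ} (hf : f ∈ Spn x a b) :
    (fun k => (∑ i, u i * (starRingEnd ℂ) (x k i)) * f k) ∈ Spn x a (b + 1) := by
  have key : (fun k => (∑ i, u i * (starRingEnd ℂ) (x k i)) * f k)
      = ∑ i : Fin d, u i • fun k => (starRingEnd ℂ) (x k i) * f k := by
    funext k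
    simp [Finset.sum_apply, Finset.sum_mul, smul_eq_mul, mul_assoc]
  rw [key]
  exact Submodule.sum_mem _ fun i _ => Submodule.smul_mem _ _ (mulw x i hf)

lemma mulr {a b : ℕ} {f : Fin n → ℂ} (hf : f ∈ Spn x a b) :
    (fun k => (∑ i, x k i * (starRingEnd ℂ) (x k i)) * f k) ∈ Spn x (a + 1) (b + 1) := by
  have key : (fun k => (∑ i, x k i * (starRingEnd ℂ) (x k i)) * f k)
      = ∑ i : Fin d, fun k => x k i * ((starRingEnd ℂ) (x k i) * f k) := by
    funext k
    simp [Finset.sum_apply, Finset.sum_mul, mul_assoc]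
  rw [key]
  exact Submodule.sum_mem _ fun i _ => mulz x i (mulw x i hf)

lemma one_mem : (fun _ : Fin n => (1 : ℂ)) ∈ Spn x 0 0 := by
  have : (fun _ : Fin n => (1 : ℂ)) = mono x 0 0 := by
    funext k; simp [mono]
  rw [this]
  exact mono_mem x (by simp) (by simp)

lemma factor_mem (w : Fin d → ℂ) (c : ℂ) {a b : ℕ} {f : Fin n → ℂ} (hf : f ∈ Spn x a b) :
    (fun k => ((∑ i, (starRingEnd ℂ) (w i) * x k i) * (∑ i, w i * (starRingEnd ℂ) (x k i))
        - c * ∑ i, x k i * (starRingEnd ℂ) (x k i)) * f k) ∈ Spn x (a + 1) (b + 1) := by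
  have h1 := mulq x w hf
  have h2 := mulp x (fun i => (starRingEnd ℂ) (w i)) h1
  have h3 := mulr x hf
  have key : (fun k => ((∑ i, (starRingEnd ℂ) (w i) * x k i) * (∑ i, w i * (starRingEnd ℂ) (x k i))
        - c * ∑ i, x k i * (starRingEnd ℂ) (x k i)) * f k)
      = (fun k => (∑ i, (starRingEnd ℂ) (w i) * x k i) *
          ((fun k => (∑ i, w i * (starRingEnd ℂ) (x k i)) * f k) k))
        - c • fun k => (∑ i, x k i * (starRingEnd ℂ) (x k i)) * f k := by
    funext k
    simp only [Pi.sub_apply, Pi.smul_apply, smul_eq_mul]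
    ring
  rw [key]
  exact Submodule.sub_mem _ h2 (Submodule.smul_mem _ _ h3)

lemma prod_mem (w : Fin d → ℂ) (B : Finset ℝ) :
    (fun k => ∏ a ∈ B, ((∑ i, (starRingEnd ℂ) (w i) * x k i) *
        (∑ i, w i * (starRingEnd ℂ) (x k i))
        - (a : ℂ) * ∑ i, x k i * (starRingEnd ℂ) (x k i))) ∈ Spn x B.card B.card := by
  classical
  induction B using Finset.induction_on with
  | empty => simpa using one_mem x
  | @insert a B ha ih =>
    have key : (fun k => ∏ a' ∈ insert a B, ((∑ i, (starRingEnd ℂ) (w i) * x k i) *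
          (∑ i, w i * (starRingEnd ℂ) (x k i))
          - (a' : ℂ) * ∑ i, x k i * (starRingEnd ℂ) (x k i)))
        = fun k => ((∑ i, (starRingEnd ℂ) (w i) * x k i) *
          (∑ i, w i * (starRingEnd ℂ) (x k i))
          - (a : ℂ) * ∑ i, x k i * (starRingEnd ℂ) (x k i)) *
          ((fun k => ∏ a' ∈ B, ((∑ i, (starRingEnd ℂ) (w i) * x k i) *
            (∑ i, w i * (starRingEnd ℂ) (x k i))
            - (a' : ℂ) * ∑ i, x k i * (starRingEnd ℂ) (x k i))) k) := by
      funext k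
      rw [Finset.prod_insert ha]
    rw [key, Finset.card_insert_of_notMem ha]
    exact factor_mem x w _ ih

lemma card_finset_sum {ι α : Type*} (s : Finset ι) (f : ι → Multiset α) :
    Multiset.card (∑ i ∈ s, f i) = ∑ i ∈ s, Multiset.card (f i) := by
  classical
  induction s using Finset.cons_induction with
  | empty => simp
  | cons a s ha ih => simp [Finset.sum_cons, ih]

lemma card_tuple_le (d m : ℕ) :
    (Finset.Nat.antidiagonalTuple d m).card ≤ (m + d - 1).choose m := by
  classical
  rw [← Fintype.card_coe]
  have hinj : Function.Injective
      (fun (y : {z // z ∈ Finset.Nat.antidiagonalTuple d m}) =>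
        (⟨∑ i, Multiset.replicate (y.1 i) i, by
          rw [card_finset_sum]
          simpa [Multiset.card_replicate] using
            Finset.Nat.mem_antidiagonalTuple.1 y.2⟩ : Sym (Fin d) m)) := by
    intro y z h
    have h' : (∑ i, Multiset.replicate (y.1 i) i) = ∑ i, Multiset.replicate (z.1 i) i :=
      congrArg Subtype.val h
    ext j
    have := congrArg (Multiset.count j) h'
    simpa [Multiset.count_sum', Multiset.count_replicate] using this
  calc Fintype.card {z // z ∈ Finset.Nat.antidiagonalTuple d m}
      ≤ Fintype.card (Sym (Fin d) m) := Fintype.card_le_of_injective _ hinj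
    _ = (m + d - 1).choose m := by
        rw [Sym.card_sym_eq_choose, Fintype.card_fin, Nat.add_comm]

end SAngularAux

open SAngularAux in
/-- Bound for `s`-angular sets of lines in `ℂ^d`: if unit vectors `v_1,…,v_n` span
pairwise distinct lines and the values `|⟨v_j,v_k⟩|²`, `j ≠ k`, lie in a set
`A ⊆ [0,1)` of size `s`, then `n ≤ C(s+d−1,d−1)·C(s−ε+d−1,d−1)`, where `ε = 1` if
`0 ∈ A` and `ε = 0` otherwise. -/
theorem s_angular_lines_bound (d : ℕ) (hd : 1 ≤ d) (s : ℕ)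
    (A : Finset ℝ) (hAcard : A.card = s) (hA : ∀ x ∈ A, 0 ≤ x ∧ x < 1)
    (n : ℕ) (v : Fin n → EuclideanSpace ℂ (Fin d))
    (hv : ∀ j, ‖v j‖ = 1)
    (hlines : ∀ j k, j ≠ k → ∀ c : ℂ, v j ≠ c • v k)
    (hangles : ∀ j k, j ≠ k → ‖(inner ℂ (v j) (v k) : ℂ)‖ ^ 2 ∈ A) :
    n ≤ Nat.choose (s + d - 1) (d - 1) *
        Nat.choose (s - (if (0 : ℝ) ∈ A then 1 else 0) + d - 1) (d - 1) := by
  classical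
  set ε : ℕ := if (0 : ℝ) ∈ A then 1 else 0 with hε
  set A' : Finset ℝ := A.erase 0 with hA'
  set t : ℕ := A'.card with ht
  set x : Fin n → Fin d → ℂ := fun k i => v k i with hx
  -- basic inner product computations
  have hinner : ∀ j k, (inner ℂ (v j) (v k) : ℂ) = ∑ i, (starRingEnd ℂ) (x j i) * x k i := by
    intro j k
    simp [PiLp.inner_apply, RCLike.inner_apply, hx, mul_comm]
  have hself : ∀ k, (∑ i, (starRingEnd ℂ) (x k i) * x k i) = 1 := by
    intro k
    rw [← hinner k k]
    rw [inner_self_eq_norm_sq_to_K, hv k]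
    norm_num
  have hR : ∀ k, (∑ i, x k i * (starRingEnd ℂ) (x k i)) = 1 := by
    intro k
    rw [← hself k]
    exact Finset.sum_congr rfl fun i _ => mul_comm _ _
  have hconjsum : ∀ j k, (∑ i, x j i * (starRingEnd ℂ) (x k i))
      = (starRingEnd ℂ) (∑ i, (starRingEnd ℂ) (x j i) * x k i) := by
    intro j k
    rw [map_sum]
    exact Finset.sum_congr rfl fun i _ => by rw [map_mul, RingHomCompTriple.comp_apply]; simp
  -- the delta-like functions
  set G : Fin n → Fin n → ℂ := fun j k =>
    (∑ i, (starRingEnd ℂ) (x j i) * x k i) ^ ε *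
      ∏ a ∈ A', ((∑ i, (starRingEnd ℂ) (x j i) * x k i) *
        (∑ i, x j i * (starRingEnd ℂ) (x k i))
        - (a : ℂ) * ∑ i, x k i * (starRingEnd ℂ) (x k i)) with hG
  -- membership in the span
  have hGmem : ∀ j, G j ∈ Spn x (t + ε) t := by
    intro j
    have hprod := prod_mem x (x j) A'
    by_cases h0 : (0 : ℝ) ∈ A
    · have hε1 : ε = 1 := by simp [hε, h0]
      rw [hε1]
      have := mulp x (fun i => (starRingEnd ℂ) (x j i)) hprod
      have keq : G j = fun k => (∑ i, (starRingEnd ℂ) (x j i) * x k i) *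
          ((fun k => ∏ a ∈ A', ((∑ i, (starRingEnd ℂ) (x j i) * x k i) *
            (∑ i, x j i * (starRingEnd ℂ) (x k i))
            - (a : ℂ) * ∑ i, x k i * (starRingEnd ℂ) (x k i))) k) := by
        funext k
        simp [hG, hε1, pow_one]
      rw [keq]
      exact this
    · have hε0 : ε = 0 := by simp [hε, h0]
      rw [hε0, Nat.add_zero]
      have keq : G j = fun k => ∏ a ∈ A', ((∑ i, (starRingEnd ℂ) (x j i) * x k i) *
          (∑ i, x j i * (starRingEnd ℂ) (x k i))
          - (a : ℂ) * ∑ i, x k i * (starRingEnd ℂ) (x k i)) := by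
        funext k
        simp [hG, hε0]
      rw [keq]
      exact hprod
  -- evaluations
  have hGdiag : ∀ j, G j j ≠ 0 := by
    intro j
    have h1 : (∑ i, (starRingEnd ℂ) (x j i) * x j i) = 1 := hself j
    have h2 : (∑ i, x j i * (starRingEnd ℂ) (x j i)) = 1 := hR j
    simp only [hG, h1, h2, one_pow, mul_one, one_mul]
    rw [Finset.prod_ne_zero_iff]
    intro a ha
    have haA : a ∈ A := Finset.mem_of_mem_erase ha
    have halt : a < 1 := (hA a haA).2
    intro hcontra
    have h1a : (1 : ℂ) = (a : ℂ) := sub_eq_zero.1 hcontra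
    have : a = 1 := by exact_mod_cast h1a.symm
    linarith
  have hGoff : ∀ j k, k ≠ j → G j k = 0 := by
    intro j k hkj
    have hjk : j ≠ k := fun h => hkj h.symm
    set z : ℂ := ∑ i, (starRingEnd ℂ) (x j i) * x k i with hz
    have hzi : z = (inner ℂ (v j) (v k) : ℂ) := by rw [hinner j k]
    have haA : ‖(inner ℂ (v j) (v k) : ℂ)‖ ^ 2 ∈ A := hangles j k hjk
    set a₀ : ℝ := ‖(inner ℂ (v j) (v k) : ℂ)‖ ^ 2 with ha₀
    have hpq : z * (∑ i, x j i * (starRingEnd ℂ) (x k i)) = (a₀ : ℂ) := by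
      rw [hconjsum j k, ← hz, Complex.mul_conj, hzi]
      rw [Complex.normSq_eq_norm_sq]
    by_cases h0 : a₀ = 0
    · -- then z = 0 and ε = 1
      have hz0 : z = 0 := by
        rw [hzi]
        have : ‖(inner ℂ (v j) (v k) : ℂ)‖ = 0 := by
          have := h0
          nlinarith [norm_nonneg (inner ℂ (v j) (v k) : ℂ)]
        exact norm_eq_zero.1 this
      have h0A : (0 : ℝ) ∈ A := by rwa [h0] at haA
      have hε1 : ε = 1 := by simp [hε, h0A]
      simp only [hG, ← hz, hz0, hε1, pow_one, zero_mul]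
    · have ha₀A' : a₀ ∈ A' := Finset.mem_erase.2 ⟨h0, haA⟩
      have hfac : z * (∑ i, x j i * (starRingEnd ℂ) (x k i))
          - (a₀ : ℂ) * ∑ i, x k i * (starRingEnd ℂ) (x k i) = 0 := by
        rw [hpq, hR k, mul_one, sub_self]
      simp only [hG, ← hz]
      rw [Finset.prod_eq_zero ha₀A' hfac, mul_zero]
  -- linear independence
  have hind : LinearIndependent ℂ G := by
    rw [Fintype.linearIndependent_iff]
    intro g hg j
    have hgj := congrFun hg j
    rw [Finset.sum_apply] at hgj
    rw [Finset.sum_eq_single j (fun b _ hb => by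
        simp [hGoff b j (fun h => hb h.symm)]) (fun h => absurd (Finset.mem_univ j) h)] at hgj
    simp only [Pi.smul_apply, smul_eq_mul, Pi.zero_apply] at hgj
    exact (mul_eq_zero.1 hgj).resolve_right (hGdiag j)
  -- t + ε = s
  have hts : t + ε = s := by
    by_cases h0 : (0 : ℝ) ∈ A
    · have h1 : ε = 1 := by simp [hε, h0]
      have h2 : t = s - 1 := by
        rw [ht, hA', Finset.card_erase_of_mem h0, hAcard]
      have hs1 : 1 ≤ s := by
        rw [← hAcard]
        exact Finset.card_pos.2 ⟨0, h0⟩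
      omega
    · have h1 : ε = 0 := by simp [hε, h0]
      have h2 : t = s := by
        rw [ht, hA', Finset.erase_eq_of_notMem h0, hAcard]
      omega
  -- independence inside the submodule
  have hGmem' : ∀ j, G j ∈ Spn x s t := fun j => hts ▸ hGmem j
  set G' : Fin n → Spn x s t := fun j => ⟨G j, hGmem' j⟩ with hG'
  have hind' : LinearIndependent ℂ G' :=
    LinearIndependent.of_comp (Spn x s t).subtype hind
  have hfin : FiniteDimensional ℂ (Spn x s t) := by
    rw [Spn]
    infer_instance
  have hn : n ≤ Module.finrank ℂ (Spn x s t) := by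
    simpa using hind'.fintype_card_le_finrank
  have hrank : Module.finrank ℂ (Spn x s t) ≤ (T x s t).card :=
    finrank_span_finset_le_card _
  have hcard : (T x s t).card ≤ (s + d - 1).choose s * (t + d - 1).choose t := by
    calc (T x s t).card
        ≤ (Finset.Nat.antidiagonalTuple d s ×ˢ Finset.Nat.antidiagonalTuple d t).card :=
          Finset.card_image_le
      _ = (Finset.Nat.antidiagonalTuple d s).card * (Finset.Nat.antidiagonalTuple d t).card :=
          Finset.card_product _ _
      _ ≤ (s + d - 1).choose s * (t + d - 1).choose t :=
          Nat.mul_le_mul (card_tuple_le d s) (card_tuple_le d t)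
  have hchoose : ∀ m : ℕ, (m + d - 1).choose m = (m + d - 1).choose (d - 1) := by
    intro m
    have h2 := Nat.choose_symm (n := m + d - 1) (k := d - 1) (by omega)
    rw [show m + d - 1 - (d - 1) = m by omega] at h2
    exact h2
  have htse : t = s - ε := by rw [← hts]; omega
  calc n ≤ Module.finrank ℂ (Spn x s t) := hn
    _ ≤ (T x s t).card := hrank
    _ ≤ (s + d - 1).choose s * (t + d - 1).choose t := hcard
    _ = (s + d - 1).choose (d - 1) * (s - ε + d - 1).choose (d - 1) := by
        rw [hchoose s, hchoose t, htse]
    _ = _ := by rw [hε]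
end

section
/- Let v_1,…,v_n be distinct unit vectors in ℂ^d (d ≥ 1) whose pairwise inner products ⟨v_j,v_k⟩ (j ≠ k) all have real part equal to a fixed a ∈ ℝ. Then n ≤ 2d+1 if a ≠ 0, and n ≤ 2d if a = 0. Moreover, if n = 2d+1 with a ≠ 0, then a = −1/(2d). -/
/-- If the pairwise inner products of `n` distinct unit vectors in `ℂ^d` all have
real part equal to a fixed `a`, then `n ≤ 2d+1` when `a ≠ 0` and `n ≤ 2d` when
`a = 0`; moreover if `n = 2d+1` (with `a ≠ 0`) then `a = −1/(2d)`. -/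
theorem fixed_real_part_bound (d : ℕ) (hd : 1 ≤ d) (a : ℝ)
    (n : ℕ) (v : Fin n → EuclideanSpace ℂ (Fin d))
    (hv : ∀ j, ‖v j‖ = 1) (hdist : Function.Injective v)
    (hangles : ∀ j k, j ≠ k → ((inner ℂ (v j) (v k) : ℂ)).re = a) :
    (a ≠ 0 → n ≤ 2 * d + 1) ∧
    (a = 0 → n ≤ 2 * d) ∧
    (n = 2 * d + 1 → a ≠ 0 → a = -1 / (2 * d)) := by
  -- The real inner product on `EuclideanSpace ℂ (Fin d)` is the real part of the
  -- complex inner product.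
  have hre : ∀ x y : EuclideanSpace ℂ (Fin d),
      (inner ℝ x y : ℝ) = ((inner ℂ x y : ℂ)).re := by
    intro x y
    rw [PiLp.inner_apply, PiLp.inner_apply, Complex.re_sum]
    rfl
  have hA : ∀ j k, j ≠ k → (inner ℝ (v j) (v k) : ℝ) = a := by
    intro j k h
    rw [hre]; exact hangles j k h
  have h1 : ∀ j, (inner ℝ (v j) (v j) : ℝ) = 1 := by
    intro j
    rw [real_inner_self_eq_norm_sq, hv]; norm_num
  have hfr : Module.finrank ℝ (EuclideanSpace ℂ (Fin d)) = 2 * d := by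
    rw [← Module.finrank_mul_finrank ℝ ℂ (EuclideanSpace ℂ (Fin d)),
      Complex.finrank_real_complex, finrank_euclideanSpace, Fintype.card_fin]
  have key : ∀ m : ℕ, 2 * d + 1 ≤ m → m ≤ n → 1 + ((m : ℝ) - 1) * a = 0 := by
    intro m hm hmn
    have h2n : 2 ≤ n := by omega
    -- a < 1 since the first two vectors are distinct unit vectors
    have hne : v ⟨0, by omega⟩ ≠ v ⟨1, by omega⟩ := by
      intro h
      have := hdist h
      simp [Fin.ext_iff] at this
    have ha1 : a < 1 := by
      have hpos : (0:ℝ) < ‖v ⟨0, by omega⟩ - v ⟨1, by omega⟩‖ :=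
        norm_pos_iff.mpr (sub_ne_zero.mpr hne)
      have hab : (inner ℝ (v ⟨0, by omega⟩) (v ⟨1, by omega⟩) : ℝ) = a :=
        hA _ _ (by simp [Fin.ext_iff])
      have hba : (inner ℝ (v ⟨1, by omega⟩) (v ⟨0, by omega⟩) : ℝ) = a :=
        hA _ _ (by simp [Fin.ext_iff])
      have hexp := norm_sub_sq_real (v ⟨0, by omega⟩) (v ⟨1, by omega⟩)
      rw [hab, hv, hv] at hexp
      nlinarith [hpos, hexp]
    -- the first m vectors are linearly dependent over ℝ
    set u : Fin m → EuclideanSpace ℂ (Fin d) := fun i => v (Fin.castLE hmn i) with hu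
    have hdep : ¬ LinearIndependent ℝ u := by
      intro h
      have := h.fintype_card_le_finrank
      rw [hfr, Fintype.card_fin] at this
      omega
    obtain ⟨g, hg0, i₀, hi₀⟩ := Fintype.not_linearIndependent_iff.mp hdep
    set S : ℝ := ∑ i, g i with hS
    have hk : ∀ k : Fin m, (1 - a) * g k + a * S = 0 := by
      intro k
      have h0 : (inner ℝ (u k) (∑ i, g i • u i) : ℝ) = 0 := by
        rw [hg0, inner_zero_right]
      rw [inner_sum] at h0
      simp_rw [real_inner_smul_right] at h0
      have hterm : ∀ i : Fin m, g i * (inner ℝ (u k) (u i) : ℝ)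
          = a * g i + (if i = k then (1 - a) * g i else 0) := by
        intro i
        by_cases h : i = k
        · subst h
          rw [h1]
          simp; ring
        · have hik : (inner ℝ (u k) (u i) : ℝ) = a := by
            apply hA
            intro hc
            exact h (Fin.castLE_injective hmn hc).symm
          rw [hik]
          simp [h]; ring
      rw [Finset.sum_congr rfl (fun i _ => hterm i)] at h0
      rw [Finset.sum_add_distrib, ← Finset.mul_sum, Finset.sum_ite_eq'] at h0
      simp at h0
      linarith
    have ha1' : (1 : ℝ) - a ≠ 0 := by linarith
    have hSne : S ≠ 0 := by
      intro h
      apply hi₀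
      have := hk i₀
      rw [h, mul_zero, add_zero] at this
      exact (mul_eq_zero.mp this).resolve_left ha1'
    have hsum : ((1 - a) + (m : ℝ) * a) * S = 0 := by
      have h : ∑ k : Fin m, ((1 - a) * g k + a * S) = 0 := by
        simp [hk]
      rw [Finset.sum_add_distrib, ← Finset.mul_sum, ← hS, Finset.sum_const,
        Finset.card_univ, Fintype.card_fin, nsmul_eq_mul] at h
      ring_nf
      ring_nf at h
      linarith
    have := (mul_eq_zero.mp hsum).resolve_right hSne
    nlinarith [this]
  refine ⟨?_, ?_, ?_⟩
  · intro ha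
    by_contra h
    push_neg at h
    have e1 := key (2 * d + 1) le_rfl (by omega)
    have e2 := key (2 * d + 2) (by omega) (by omega)
    push_cast at e1 e2
    exact ha (by linarith)
  · intro ha0
    by_contra h
    push_neg at h
    have e1 := key (2 * d + 1) le_rfl (by omega)
    rw [ha0] at e1
    simp at e1
  · intro hn _
    have e1 := key (2 * d + 1) le_rfl (by omega)
    push_cast at e1
    have h2d : (0:ℝ) < 2 * d := by
      have : (1:ℝ) ≤ d := by exact_mod_cast hd
      linarith
    field_simp
    linarith
end
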